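/- Let $0<\gamma\le 1$, $1<q<\infty$, $w\in\mathcal{A}_q$, $y\in\mathbb{R}^n$, $r>0$, $B=B(y,r)$, and let $f$ be supported in $(2B)^c$. Then for every $x\in B$, $S_\gamma(f)(x) \le C\sum_{k=1}^\infty \frac{1}{|2^{k+1}B|}\int_{2^{k+1}B\setminus 2^k B}|f(z)|\,dz$, with $C$ depending only on $n$. -/

import Mathlib

open MeasureTheory Metric ENNReal

noncomputable section

/-- The family `𝒞_γ`: functions supported in the closed unit ball, with vanishing
integral, satisfying the Hölder condition `|φ(x) - φ(x')| ≤ |x - x'|^γ`. -/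
def IsCgamma (n : ℕ) (γ : ℝ) (φ : EuclideanSpace ℝ (Fin n) → ℝ) : Prop :=
  Function.support φ ⊆ closedBall 0 1 ∧ (∫ x, φ x) = 0 ∧
    ∀ x x' : EuclideanSpace ℝ (Fin n), |φ x - φ x'| ≤ ‖x - x'‖ ^ γ

/-- `sup_{φ ∈ 𝒞_γ} |f * φ_t(y)|`, where `φ_t(x) = t^{-n} φ(x/t)`. -/
def intAmp (n : ℕ) (γ : ℝ) (f : EuclideanSpace ℝ (Fin n) → ℝ)
    (y : EuclideanSpace ℝ (Fin n)) (t : ℝ) : ℝ≥0∞ :=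
  ⨆ (φ : EuclideanSpace ℝ (Fin n) → ℝ) (_ : IsCgamma n γ φ),
    ENNReal.ofReal |∫ z, f z * (t ^ (-(n : ℝ)) * φ (t⁻¹ • (y - z)))|

/-- The varying-aperture intrinsic square function `S_{γ,β}`:
`S_{γ,β}(f)(x) = (∬_{Γ_β(x)} (sup_{φ ∈ 𝒞_γ} |f * φ_t(y)|)² dy dt / t^{n+1})^{1/2}`. -/
def Sgb (n : ℕ) (γ β : ℝ) (f : EuclideanSpace ℝ (Fin n) → ℝ)
    (x : EuclideanSpace ℝ (Fin n)) : ℝ≥0∞ :=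
  (∫⁻ t in Set.Ioi (0 : ℝ),
      (∫⁻ y in ball x (β * t), intAmp n γ f y t ^ 2) /
        ENNReal.ofReal (t ^ ((n : ℝ) + 1))) ^ ((1 : ℝ) / 2)

/-- The intrinsic Littlewood–Paley `g^*_λ` function `g^*_{λ,γ}`. -/
def gStar (n : ℕ) (γ lam : ℝ) (f : EuclideanSpace ℝ (Fin n) → ℝ)
    (x : EuclideanSpace ℝ (Fin n)) : ℝ≥0∞ :=
  (∫⁻ t in Set.Ioi (0 : ℝ),
      (∫⁻ y, ENNReal.ofReal (t / (t + dist x y)) ^ (lam * (n : ℝ)) *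
          intAmp n γ f y t ^ 2) /
        ENNReal.ofReal (t ^ ((n : ℝ) + 1))) ^ ((1 : ℝ) / 2)
/-- The Muckenhoupt `𝒜_q` condition for a weight `w` on `ℝⁿ`. -/
def IsAq (n : ℕ) (q : ℝ) (w : EuclideanSpace ℝ (Fin n) → ℝ) : Prop :=
  (∀ x, 0 < w x) ∧ LocallyIntegrable w volume ∧
  ∃ C : ℝ, 0 < C ∧ ∀ (y : EuclideanSpace ℝ (Fin n)) (r : ℝ), 0 < r →
    ((volume (ball y r)).toReal⁻¹ * ∫ x in ball y r, w x) *
      ((volume (ball y r)).toReal⁻¹ * ∫ x in ball y r, w x ^ (-1 / (q - 1))) ^ (q - 1) ≤ C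

/-- Outer `L^p` norm (usual modification when `p = ∞`). -/
def outerNorm {n : ℕ} (p : ℝ≥0∞) (g : EuclideanSpace ℝ (Fin n) → ℝ≥0∞) : ℝ≥0∞ :=
  if p = ∞ then essSup g volume
  else (∫⁻ y, g y ^ p.toReal) ^ (1 / p.toReal)


open Set

theorem myCS (f g : ℕ → ℝ≥0∞) :
    (∑' k, f k * g k) ^ 2 ≤ (∑' k, f k ^ 2) * (∑' k, g k ^ 2) := by
  have hpq : (2:ℝ).HolderConjugate 2 := Real.HolderConjugate.two_two
  have h := ENNReal.lintegral_mul_le_Lp_mul_Lq (Measure.count (α := ℕ)) hpq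
    (f := f) (g := g) (measurable_of_countable f).aemeasurable
    (measurable_of_countable g).aemeasurable
  simp only [Pi.mul_apply, lintegral_count] at h
  have h2 : (∑' k, f k * g k) ^ 2 ≤
      ((∑' k, f k ^ (2:ℝ)) ^ (1/(2:ℝ)) * (∑' k, g k ^ (2:ℝ)) ^ (1/(2:ℝ))) ^ 2 := by
    exact pow_le_pow_left' h 2
  refine h2.trans_eq ?_
  rw [mul_pow, ← ENNReal.rpow_natCast (_ ^ _) 2, ← ENNReal.rpow_natCast (_ ^ (1/(2:ℝ))) 2,
    ← ENNReal.rpow_mul, ← ENNReal.rpow_mul]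
  norm_num
theorem mySumSq (h : ℕ → ℝ≥0∞) : (∑' k, h k ^ 2) ≤ (∑' k, h k) ^ 2 := by
  rw [sq]
  calc (∑' k, h k ^ 2) ≤ ∑' k, h k * (∑' j, h j) := by
        apply ENNReal.tsum_le_tsum; intro k; rw [sq]
        exact mul_le_mul_right (ENNReal.le_tsum k) _
    _ = (∑' k, h k) * (∑' j, h j) := ENNReal.tsum_mul_right


theorem myPowSum (c : ℝ) :
    (∑' k : ℕ, if (2:ℝ) ^ k ≤ c then ((2:ℝ≥0∞)) ^ k else 0) ≤ ENNReal.ofReal (2 * c) := by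
  obtain ⟨m, hm⟩ := pow_unbounded_of_one_lt c (one_lt_two (α := ℝ))
  have hP : ∃ m : ℕ, c < 2 ^ m := ⟨m, hm⟩
  obtain ⟨M, hMdef⟩ : ∃ M, M = Nat.find hP := ⟨_, rfl⟩
  have hcM : c < 2 ^ M := hMdef ▸ Nat.find_spec hP
  have hvanish : ∀ k ∉ Finset.range M, (if (2:ℝ) ^ k ≤ c then ((2:ℝ≥0∞)) ^ k else 0) = 0 := by
    intro k hk
    rw [Finset.mem_range, not_lt] at hk
    rw [if_neg]
    push_neg
    calc c < 2 ^ M := hcM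
      _ ≤ 2 ^ k := by apply pow_le_pow_right₀ one_le_two hk
  rw [tsum_eq_sum hvanish]
  rcases Nat.eq_zero_or_pos M with h0 | hpos
  · simp [h0]
  · obtain ⟨m', rfl⟩ : ∃ m', M = m' + 1 := ⟨M - 1, by omega⟩
    have hm' : (2:ℝ) ^ m' ≤ c := by
      by_contra h
      have := Nat.find_min hP (m := m') (by omega); exact this (by linarith)
    calc (∑ k ∈ Finset.range (m'+1), if (2:ℝ) ^ k ≤ c then ((2:ℝ≥0∞)) ^ k else 0)
        ≤ ∑ k ∈ Finset.range (m'+1), (2:ℝ≥0∞) ^ k := by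
          apply Finset.sum_le_sum; intro k _; split <;> simp
      _ = ((∑ k ∈ Finset.range (m'+1), 2 ^ k : ℕ) : ℝ≥0∞) := by push_cast; ring
      _ ≤ ((2 ^ (m'+1) : ℕ) : ℝ≥0∞) := by
          have h := Nat.geomSum_lt (le_refl 2) (s := Finset.range (m'+1)) (n := m'+1)
            (fun k hk => Finset.mem_range.mp hk)
          exact_mod_cast h.le
      _ ≤ ENNReal.ofReal (2 * c) := by
          rw [← ENNReal.ofReal_natCast]
          apply ENNReal.ofReal_le_ofReal
          push_cast
          calc (2:ℝ) ^ (m'+1) = 2 * 2 ^ m' := by ring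
            _ ≤ 2 * c := by linarith



theorem myPhiBound {n : ℕ} (hn : 1 ≤ n) {γ : ℝ} (hγ0 : 0 < γ) (hγ1 : γ ≤ 1)
    {φ : EuclideanSpace ℝ (Fin n) → ℝ} (hφ : IsCgamma n γ φ)
    (v : EuclideanSpace ℝ (Fin n)) : |φ v| ≤ 3 := by
  obtain ⟨hsupp, -, hHol⟩ := hφ
  have hzero : ∀ u : EuclideanSpace ℝ (Fin n), 1 < ‖u‖ → φ u = 0 := by
    intro u hu
    by_contra h
    have := hsupp (Function.mem_support.mpr h)
    rw [mem_closedBall, dist_zero_right] at this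
    linarith
  by_cases hv : 1 < ‖v‖
  · rw [hzero v hv]; norm_num
  push_neg at hv
  set u : EuclideanSpace ℝ (Fin n) := EuclideanSpace.single (⟨0, by omega⟩ : Fin n) (3:ℝ)
    with hu
  have hnu : ‖u‖ = 3 := by rw [hu, EuclideanSpace.norm_single]; norm_num
  have h2 : 1 < ‖v + u‖ := by
    have h3 : ‖u‖ ≤ ‖v + u‖ + ‖v‖ := by
      calc ‖u‖ = ‖(v + u) - v‖ := by rw [add_sub_cancel_left]
        _ ≤ ‖v + u‖ + ‖v‖ := norm_sub_le _ _
    linarith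
  calc |φ v| = |φ v - φ (v + u)| := by rw [hzero _ h2, sub_zero]
    _ ≤ ‖v - (v + u)‖ ^ γ := hHol v (v + u)
    _ = (3:ℝ) ^ γ := by rw [show v - (v+u) = -u by abel, norm_neg, hnu]
    _ ≤ (3:ℝ) ^ (1:ℝ) := Real.rpow_le_rpow_of_exponent_le (by norm_num) hγ1
    _ = 3 := Real.rpow_one 3

theorem myCover {n : ℕ} (y z : EuclideanSpace ℝ (Fin n)) {r : ℝ} (hr : 0 < r)
    (hz : 2 * r ≤ dist z y) :
    ∃ k : ℕ, z ∈ ball y ((2:ℝ) ^ (k+2) * r) \ ball y ((2:ℝ) ^ (k+1) * r) := by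
  set x : ℝ := dist z y / (2 * r) with hx
  have hx1 : 1 ≤ x := (one_le_div (by linarith)).mpr hz
  set m : ℕ := ⌊x⌋₊ with hm
  have hm1 : 1 ≤ m := Nat.le_floor (by exact_mod_cast hx1)
  refine ⟨Nat.log 2 m, ?_, ?_⟩
  · rw [mem_ball]
    have h1 : x < (m:ℝ) + 1 := Nat.lt_floor_add_one x
    have h2 : (m:ℝ) + 1 ≤ 2 ^ (Nat.log 2 m + 1) := by
      have := Nat.lt_pow_succ_log_self (le_refl 2) m
      exact_mod_cast Nat.succ_le_of_lt this
    have : dist z y = x * (2 * r) := by rw [hx, div_mul_cancel₀ _ (by positivity)]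
    rw [this]
    calc x * (2 * r) < ((m:ℝ)+1) * (2*r) := by nlinarith
      _ ≤ 2 ^ (Nat.log 2 m + 1) * (2 * r) := by nlinarith
      _ = 2 ^ (Nat.log 2 m + 2) * r := by ring
  · rw [mem_ball, not_lt]
    have h1 : (2:ℝ) ^ Nat.log 2 m ≤ m := by
      exact_mod_cast Nat.pow_log_le_self 2 (by omega)
    have h2 : (m:ℝ) ≤ x := Nat.floor_le (by linarith)
    have : dist z y = x * (2 * r) := by rw [hx, div_mul_cancel₀ _ (by positivity)]
    rw [this]
    calc (2:ℝ) ^ (Nat.log 2 m + 1) * r = 2 ^ Nat.log 2 m * (2 * r) := by ring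
      _ ≤ x * (2 * r) := by nlinarith


theorem myPointwise {n : ℕ} (hn : 1 ≤ n) {γ : ℝ} (hγ0 : 0 < γ) (hγ1 : γ ≤ 1)
    {y x y' : EuclideanSpace ℝ (Fin n)} {r t : ℝ} (hr : 0 < r) (ht : 0 < t)
    (hx : x ∈ ball y r) (hy' : y' ∈ ball x t)
    (f : EuclideanSpace ℝ (Fin n) → ℝ) (hf0 : ∀ z ∈ ball y (2 * r), f z = 0) :
    intAmp n γ f y' t ≤ ENNReal.ofReal (3 * t ^ (-(n:ℝ))) *
      ∑' k : ℕ, (if (2:ℝ) ^ k * r ≤ 2 * t then (1:ℝ≥0∞) else 0) *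
        ∫⁻ z in ball y ((2:ℝ) ^ (k+2) * r) \ ball y ((2:ℝ) ^ (k+1) * r),
          ENNReal.ofReal |f z| := by
  have htN : (0:ℝ) < t ^ (-(n:ℝ)) := Real.rpow_pos_of_pos ht _
  apply iSup₂_le
  intro φ hφ
  set S : Set (EuclideanSpace ℝ (Fin n)) := closedBall y' t \ ball y (2*r) with hS
  have step1 : ENNReal.ofReal |∫ z, f z * (t ^ (-(n:ℝ)) * φ (t⁻¹ • (y' - z)))| ≤
      ∫⁻ z, S.indicator (fun z => ENNReal.ofReal (3 * t ^ (-(n:ℝ))) * ENNReal.ofReal |f z|) z := by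
    have hmain := enorm_integral_le_lintegral_enorm (μ := volume)
      (fun z => f z * (t ^ (-(n:ℝ)) * φ (t⁻¹ • (y' - z))))
    rw [← ofReal_norm_eq_enorm, Real.norm_eq_abs] at hmain
    refine hmain.trans ?_
    apply lintegral_mono
    intro z
    show (‖f z * (t ^ (-(n:ℝ)) * φ (t⁻¹ • (y' - z)))‖ₑ) ≤ _
    rw [← ofReal_norm_eq_enorm, Real.norm_eq_abs]
    by_cases hzS : z ∈ S
    · rw [Set.indicator_of_mem hzS]
      rw [← ENNReal.ofReal_mul (by positivity)]
      apply ENNReal.ofReal_le_ofReal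
      rw [abs_mul, abs_mul]
      have hb := myPhiBound hn hγ0 hγ1 hφ (t⁻¹ • (y' - z))
      have habs : |t ^ (-(n:ℝ))| = t ^ (-(n:ℝ)) := abs_of_pos htN
      calc |f z| * (|t ^ (-(n:ℝ))| * |φ (t⁻¹ • (y' - z))|)
          ≤ |f z| * (t ^ (-(n:ℝ)) * 3) := by
            rw [habs]; gcongr
        _ = 3 * t ^ (-(n:ℝ)) * |f z| := by ring
    · rw [Set.indicator_of_notMem hzS]
      rw [hS, Set.mem_diff, not_and_or, not_not] at hzS
      rcases hzS with h | h
      · have hφ0 : φ (t⁻¹ • (y' - z)) = 0 := by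
          obtain ⟨hsupp, -, -⟩ := hφ
          by_contra hne
          have hmem := hsupp (Function.mem_support.mpr hne)
          rw [mem_closedBall, dist_zero_right, norm_smul] at hmem
          rw [mem_closedBall, not_le] at h
          rw [norm_inv, Real.norm_eq_abs, abs_of_pos ht] at hmem
          have : ‖y' - z‖ = dist z y' := by rw [dist_comm, dist_eq_norm]
          rw [this] at hmem
          have : dist z y' ≤ t := by
            rw [← mul_le_mul_iff_right₀ (inv_pos.mpr ht)]
            calc t⁻¹ * dist z y' ≤ 1 := hmem
              _ = t⁻¹ * t := by field_simp
          linarith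
        simp [hφ0]
      · rw [hf0 z h]; simp
  refine step1.trans ?_
  rw [lintegral_indicator (measurableSet_closedBall.diff measurableSet_ball)]
  rw [lintegral_const_mul' _ _ ENNReal.ofReal_ne_top]
  apply mul_le_mul_right
  calc (∫⁻ z in S, ENNReal.ofReal |f z|) ≤
      ∫⁻ z in ⋃ k : ℕ, (S ∩ (ball y ((2:ℝ)^(k+2)*r) \ ball y ((2:ℝ)^(k+1)*r))), ENNReal.ofReal |f z| := by
        apply lintegral_mono_set
        intro z hz
        have hz2 : 2 * r ≤ dist z y := by
          have := hz.2
          rw [mem_ball, not_lt] at this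
          exact this
        obtain ⟨k, hk⟩ := myCover y z hr hz2
        exact Set.mem_iUnion.mpr ⟨k, hz, hk⟩
    _ ≤ ∑' k : ℕ, ∫⁻ z in S ∩ (ball y ((2:ℝ)^(k+2)*r) \ ball y ((2:ℝ)^(k+1)*r)), ENNReal.ofReal |f z| :=
        lintegral_iUnion_le _ _
    _ ≤ _ := by
        apply ENNReal.tsum_le_tsum
        intro k
        by_cases hc : (2:ℝ) ^ k * r ≤ 2 * t
        · rw [if_pos hc, one_mul]
          exact lintegral_mono_set Set.inter_subset_right
        · rw [if_neg hc, zero_mul]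
          have hemp : S ∩ (ball y ((2:ℝ)^(k+2)*r) \ ball y ((2:ℝ)^(k+1)*r)) = ∅ := by
            ext z
            simp only [Set.mem_inter_iff, Set.mem_empty_iff_false, iff_false, not_and]
            intro hzS hzA
            rw [not_le] at hc
            have h1 : dist z y' ≤ t := mem_closedBall.mp hzS.1
            have h2 : (2:ℝ)^(k+1) * r ≤ dist z y := by
              have := hzA.2; rw [mem_ball, not_lt] at this; exact this
            have h3 : dist y' y < t + r := by
              calc dist y' y ≤ dist y' x + dist x y := dist_triangle _ _ _
                _ < t + r := by
                  have := mem_ball.mp hy'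
                  have := mem_ball.mp hx
                  rw [dist_comm] at *
                  linarith [mem_ball.mp hy', mem_ball.mp hx]
            have h4 : dist z y ≤ dist z y' + dist y' y := dist_triangle _ _ _
            have hpow : (1:ℝ) ≤ 2 ^ k := one_le_pow₀ one_le_two
            have : (2:ℝ)^(k+1) * r = 2 * (2^k * r) := by ring
            nlinarith
          rw [hemp]
          simp


theorem myTInt {n : ℕ} (hn : 1 ≤ n) {β : ℝ} (hβ : 0 < β) :
    ∫⁻ t in Ioi β, ENNReal.ofReal (t ^ (-(2*(n:ℝ)))) =
      ENNReal.ofReal (β ^ (1 - 2*(n:ℝ)) / (2*(n:ℝ) - 1)) := by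
  have hn' : (1:ℝ) ≤ (n:ℝ) := by exact_mod_cast hn
  have ha : -(2*(n:ℝ)) < -1 := by linarith
  have hint := integrableOn_Ioi_rpow_of_lt ha hβ
  have hnn : 0 ≤ᵐ[volume.restrict (Ioi β)] (fun t : ℝ => t ^ (-(2*(n:ℝ)))) := by
    filter_upwards [ae_restrict_mem measurableSet_Ioi] with t ht
    exact Real.rpow_nonneg (le_of_lt (lt_trans hβ ht)) _
  rw [← ofReal_integral_eq_lintegral_ofReal hint hnn,
    integral_Ioi_rpow_of_lt ha hβ]
  congr 1
  rw [neg_div, ← div_neg]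
  ring_nf


theorem myRealBound {n k : ℕ} (hn : 1 ≤ n) {r κR : ℝ} (hr : 0 < r) (hκ : 0 ≤ κR) :
    ((2:ℝ)^k * r / 2) ^ (1 - 2*(n:ℝ)) / (2*(n:ℝ) - 1) * (κR * (36/r) * (2:ℝ)^(-(k:ℝ))) *
      (((2:ℝ)^(k+2)*r)^n * κR)^2 ≤ (18 * 2^(6*n) * (1 + κR)^3 + 3)^2 := by
  have hn1 : (1:ℝ) ≤ (n:ℝ) := by exact_mod_cast hn
  obtain ⟨P, hPdef⟩ : ∃ P : ℝ, P = (2:ℝ)^k := ⟨_, rfl⟩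
  have hP : (0:ℝ) < P := by rw [hPdef]; positivity
  obtain ⟨β, hβdef⟩ : ∃ b : ℝ, b = P * r / 2 := ⟨_, rfl⟩
  have hβ : 0 < β := by rw [hβdef]; positivity
  have h2k : (2:ℝ)^(-(k:ℝ)) = P⁻¹ := by
    rw [Real.rpow_neg (by norm_num), Real.rpow_natCast, hPdef]
  have hβpow : β ^ (1 - 2*(n:ℝ)) = β * ((β^n)^2)⁻¹ := by
    rw [show (1:ℝ) - 2*(n:ℝ) = 1 + -(2*(n:ℝ)) by ring, Real.rpow_add hβ, Real.rpow_one,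
      Real.rpow_neg hβ.le]
    congr 1
    rw [← pow_mul, ← Real.rpow_natCast β (n*2)]
    congr 1
    push_cast; ring
  have hA : (2:ℝ)^(k+2)*r = 8 * β := by
    rw [pow_add, hβdef, hPdef]; ring
  have hD : (1:ℝ) ≤ 2*(n:ℝ) - 1 := by linarith
  have hD0 : (2*(n:ℝ) - 1) ≠ 0 := by linarith
  have hE : ((2:ℝ)^k * r / 2) ^ (1 - 2*(n:ℝ)) / (2*(n:ℝ) - 1) * (κR * (36/r) * (2:ℝ)^(-(k:ℝ))) *
      (((2:ℝ)^(k+2)*r)^n * κR)^2 = 18 * ((8:ℝ)^n)^2 * κR^3 / (2*(n:ℝ) - 1) := by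
    rw [show (2:ℝ)^k * r / 2 = β by rw [hβdef, hPdef], hβpow, h2k, hA, mul_pow (8:ℝ) β n]
    obtain ⟨u, hu⟩ : ∃ u : ℝ, u = β^n := ⟨_, rfl⟩
    have hu0 : u ≠ 0 := by rw [hu]; exact pow_ne_zero _ hβ.ne'
    rw [← hu, hβdef]
    field_simp
    ring
  rw [hE]
  have h8 : ((8:ℝ)^n)^2 = 2^(6*n) := by
    rw [show (8:ℝ) = 2^3 by norm_num, ← pow_mul, ← pow_mul]
    congr 1
    ring
  rw [h8]
  calc 18 * 2^(6*n) * κR^3 / (2*(n:ℝ) - 1) ≤ 18 * 2^(6*n) * κR^3 := by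
        apply div_le_self (by positivity) hD
    _ ≤ 18 * 2^(6*n) * (1+κR)^3 := by
        gcongr
        linarith
    _ ≤ (18 * 2^(6*n) * (1 + κR)^3 + 3)^2 := by
        nlinarith [pow_pos (show (0:ℝ) < 2 by norm_num) (6*n),
          pow_nonneg (show (0:ℝ) ≤ 1+κR by linarith) 3,
          mul_nonneg (mul_nonneg (show (0:ℝ) ≤ 18 by norm_num)
            (pow_pos (show (0:ℝ) < 2 by norm_num) (6*n)).le)
            (pow_nonneg (show (0:ℝ) ≤ 1+κR by linarith) 3)]

/-- with `B = B(y,r)` and `f` supported in `(2B)ᶜ`, for every `x ∈ B`,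
`S_γ(f)(x) ≤ C ∑_{k≥1} (1/|2^{k+1}B|) ∫_{2^{k+1}B \ 2^k B} |f|`, `C = C(n)`. -/
theorem stmt15 (n : ℕ) :
    ∃ C : ℝ, 0 < C ∧ ∀ γ q : ℝ, 0 < γ → γ ≤ 1 → 1 < q →
      ∀ w : EuclideanSpace ℝ (Fin n) → ℝ, IsAq n q w →
      ∀ (y : EuclideanSpace ℝ (Fin n)) (r : ℝ), 0 < r →
      ∀ f : EuclideanSpace ℝ (Fin n) → ℝ, LocallyIntegrable f volume →
        (∀ x ∈ ball y (2 * r), f x = 0) →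
        ∀ x ∈ ball y r,
          Sgb n γ 1 f x ≤ ENNReal.ofReal C *
            ∑' k : ℕ, (volume (ball y (2 ^ (k + 2) * r)))⁻¹ *
              ∫⁻ z in ball y (2 ^ (k + 2) * r) \ ball y (2 ^ (k + 1) * r),
                ENNReal.ofReal |f z| := by
  classical
  set κ : ℝ≥0∞ := volume (ball (0 : EuclideanSpace ℝ (Fin n)) 1) with hκdef
  set κR : ℝ := κ.toReal with hκRdef
  have hκR0 : 0 ≤ κR := ENNReal.toReal_nonneg
  set C : ℝ := 18 * 2^(6*n) * (1 + κR)^3 + 3 with hCdef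
  have hCaux : (0:ℝ) ≤ 18 * 2^(6*n) * (1 + κR)^3 := by positivity
  have hC3 : 3 ≤ C := by rw [hCdef]; linarith
  have hC0 : 0 < C := by linarith
  refine ⟨C, hC0, ?_⟩
  intro γ q hγ0 hγ1 hq w hw y r hr f hfloc hf0 x hx
  rcases Nat.eq_zero_or_pos n with hn0 | hn
  · -- degenerate case n = 0 : the space is a point and f ≡ 0
    subst hn0
    have hsub : Subsingleton (EuclideanSpace ℝ (Fin 0)) := by
      constructor; intro a b; ext i; exact absurd i.2 (by omega)
    have hfz : ∀ z, f z = 0 := by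
      intro z
      apply hf0
      rw [mem_ball, @Subsingleton.elim _ hsub z y, dist_self]
      linarith
    have h1 : ∀ y' t, intAmp 0 γ f y' t = 0 := by
      intro y' t
      refine le_antisymm (iSup₂_le fun φ _ => ?_) zero_le
      simp [hfz]
    have h2 : Sgb 0 γ 1 f x = (∫⁻ _t in Set.Ioi (0:ℝ), (0:ℝ≥0∞)) ^ ((1:ℝ)/2) := by
      rw [Sgb]
      congr 1
      refine setLIntegral_congr_fun measurableSet_Ioi ?_
      intro t ht
      simp [h1]
    rw [h2, lintegral_zero]
    rw [ENNReal.zero_rpow_of_pos (by norm_num)]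
    exact zero_le
  -- main case : n ≥ 1
  haveI hNontriv : Nontrivial (EuclideanSpace ℝ (Fin n)) := by
    refine ⟨EuclideanSpace.single (⟨0, by omega⟩ : Fin n) (1:ℝ), 0, fun h => ?_⟩
    have := congrArg (fun v => ‖v‖) h
    simp only [EuclideanSpace.norm_single, norm_one, norm_zero] at this
    norm_num at this
  have hn1 : (1:ℝ) ≤ (n:ℝ) := by exact_mod_cast hn
  set N : ℝ := (n:ℝ) with hNdef
  have hκ0 : κ ≠ 0 := (measure_ball_pos volume _ one_pos).ne'
  have hκtop : κ ≠ ∞ := measure_ball_lt_top.ne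
  have hκeq : κ = ENNReal.ofReal κR := (ENNReal.ofReal_toReal hκtop).symm
  have hκRpos : 0 < κR := by
    rw [hκRdef]
    exact ENNReal.toReal_pos hκ0 hκtop
  have hball : ∀ (c : EuclideanSpace ℝ (Fin n)) (s : ℝ), 0 ≤ s →
      volume (ball c s) = ENNReal.ofReal (s^n) * κ := by
    intro c s hs
    rw [hκdef, Measure.addHaar_ball volume c hs, finrank_euclideanSpace_fin]
  -- notation
  set a : ℕ → ℝ≥0∞ := fun k =>
    ∫⁻ z in ball y ((2:ℝ)^(k+2)*r) \ ball y ((2:ℝ)^(k+1)*r), ENNReal.ofReal |f z| with hadef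
  set d : ℕ → ℝ≥0∞ := fun k => (volume (ball y ((2:ℝ)^(k+2)*r)))⁻¹ with hddef
  set χ : ℕ → ℝ → ℝ≥0∞ := fun k t => if (2:ℝ)^k * r ≤ 2*t then 1 else 0 with hχdef
  set T : ℝ≥0∞ := ∑' k : ℕ, d k * a k with hTdef
  show Sgb n γ 1 f x ≤ ENNReal.ofReal C * T
  -- reduce to squared estimate
  suffices hI : (∫⁻ t in Set.Ioi (0:ℝ),
      (∫⁻ y' in ball x (1*t), intAmp n γ f y' t ^ 2) /
        ENNReal.ofReal (t ^ (N+1))) ≤ (ENNReal.ofReal C * T)^2 by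
    rw [Sgb]
    calc (∫⁻ t in Set.Ioi (0:ℝ), (∫⁻ y' in ball x (1*t), intAmp n γ f y' t ^ 2) /
            ENNReal.ofReal (t ^ ((n:ℝ)+1))) ^ ((1:ℝ)/2)
        ≤ ((ENNReal.ofReal C * T)^2) ^ ((1:ℝ)/2) := by
          apply ENNReal.rpow_le_rpow hI (by norm_num)
      _ = ENNReal.ofReal C * T := by
          rw [← ENNReal.rpow_natCast (ENNReal.ofReal C * T) 2, ← ENNReal.rpow_mul]
          norm_num
  
  -- measurability helpers
  have hmeasχ : ∀ k : ℕ, Measurable (χ k) := by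
    intro k
    have hrw : χ k = (Set.Ici ((2:ℝ)^k * r / 2)).indicator (fun _ => (1:ℝ≥0∞)) := by
      funext t
      by_cases hc : (2:ℝ)^k * r ≤ 2*t
      · rw [hχdef]
        simp only
        rw [if_pos hc, Set.indicator_of_mem (by rw [Set.mem_Ici]; linarith)]
      · rw [hχdef]
        simp only
        rw [if_neg hc, Set.indicator_of_notMem (by rw [Set.mem_Ici]; intro h; exact hc (by linarith))]
    rw [hrw]
    exact measurable_const.indicator measurableSet_Ici
  have hmeasg : Measurable (fun t : ℝ => ENNReal.ofReal (t ^ (-(2*N)))) :=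
    (measurable_id.pow measurable_const).ennreal_ofReal
  calc (∫⁻ t in Set.Ioi (0:ℝ),
      (∫⁻ y' in ball x (1*t), intAmp n γ f y' t ^ 2) / ENNReal.ofReal (t ^ (N+1)))
      ≤ ∫⁻ t in Set.Ioi (0:ℝ), ∑' k : ℕ, χ k t * ENNReal.ofReal (t^(-(2*N))) *
          (κ * ENNReal.ofReal (36/r) * (2:ℝ≥0∞)^(-(k:ℝ)) * a k ^2) := by
        apply setLIntegral_mono' measurableSet_Ioi
        intro t ht
        have ht0 : (0:ℝ) < t := ht
        have hb : ∀ y' ∈ ball x (1*t), intAmp n γ f y' t ≤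
            ENNReal.ofReal (3 * t^(-N)) * ∑' k : ℕ, χ k t * a k := by
          intro y' hy'
          rw [one_mul] at hy'
          exact myPointwise hn hγ0 hγ1 hr ht0 hx hy' f hf0
        -- Cauchy–Schwarz step
        have hCS : (∑' k : ℕ, χ k t * a k)^2 ≤
            ENNReal.ofReal (4*t/r) * ∑' k : ℕ, χ k t * (2:ℝ≥0∞)^(-(k:ℝ)) * a k ^2 := by
          have hfg : ∀ k : ℕ, χ k t * a k =
              (χ k t * (2:ℝ≥0∞)^((k:ℝ)/2)) * (χ k t * (2:ℝ≥0∞)^(-((k:ℝ)/2)) * a k) := by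
            intro k
            rw [hχdef]
            simp only
            by_cases hc : (2:ℝ)^k * r ≤ 2*t
            · rw [if_pos hc]
              rw [one_mul, one_mul, one_mul, ← mul_assoc,
                ← ENNReal.rpow_add _ _ (by norm_num) (by norm_num)]
              norm_num
            · rw [if_neg hc]
              simp
          have hf2 : ∀ k : ℕ, (χ k t * (2:ℝ≥0∞)^((k:ℝ)/2))^2 =
              (if (2:ℝ)^k ≤ 2*t/r then ((2:ℝ≥0∞)) ^ k else 0) := by
            intro k
            rw [hχdef]
            simp only
            rw [mul_pow]
            have hcond : ((2:ℝ)^k * r ≤ 2*t) = ((2:ℝ)^k ≤ 2*t/r) := by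
              rw [eq_iff_iff, le_div_iff₀ hr]
            by_cases hc : (2:ℝ)^k * r ≤ 2*t
            · rw [if_pos hc, if_pos (by rwa [← hcond]), one_pow, one_mul,
                ← ENNReal.rpow_natCast (_ ^ ((k:ℝ)/2)) 2, ← ENNReal.rpow_mul]
              norm_num
            · rw [if_neg hc, if_neg (by rwa [← hcond]), zero_pow (by norm_num), zero_mul]
          have hg2 : ∀ k : ℕ, (χ k t * (2:ℝ≥0∞)^(-((k:ℝ)/2)) * a k)^2 =
              χ k t * (2:ℝ≥0∞)^(-(k:ℝ)) * a k ^2 := by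
            intro k
            rw [mul_pow, mul_pow]
            congr 1
            · congr 1
              · rw [hχdef]; simp only; split
                · rw [one_pow]
                · rw [zero_pow (by norm_num)]
              · rw [← ENNReal.rpow_natCast (_ ^ (-((k:ℝ)/2))) 2, ← ENNReal.rpow_mul]
                norm_num
          calc (∑' k : ℕ, χ k t * a k)^2
              = (∑' k : ℕ, (χ k t * (2:ℝ≥0∞)^((k:ℝ)/2)) *
                  (χ k t * (2:ℝ≥0∞)^(-((k:ℝ)/2)) * a k))^2 := by
                congr 1; exact tsum_congr hfg
            _ ≤ (∑' k : ℕ, (χ k t * (2:ℝ≥0∞)^((k:ℝ)/2))^2) *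
                  (∑' k : ℕ, (χ k t * (2:ℝ≥0∞)^(-((k:ℝ)/2)) * a k)^2) := myCS _ _
            _ ≤ ENNReal.ofReal (4*t/r) * ∑' k : ℕ, χ k t * (2:ℝ≥0∞)^(-(k:ℝ)) * a k ^2 := by
                apply mul_le_mul'
                · calc (∑' k : ℕ, (χ k t * (2:ℝ≥0∞)^((k:ℝ)/2))^2)
                      = ∑' k : ℕ, (if (2:ℝ)^k ≤ 2*t/r then ((2:ℝ≥0∞)) ^ k else 0) :=
                        tsum_congr hf2
                    _ ≤ ENNReal.ofReal (2 * (2*t/r)) := myPowSum _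
                    _ = ENNReal.ofReal (4*t/r) := by rw [show 2*(2*t/r) = 4*t/r by ring]
                · exact le_of_eq (tsum_congr hg2)
        -- assemble the per-t bound
        have hW0 : (0:ℝ) < t ^ (N+1) := Real.rpow_pos_of_pos ht0 _
        have hscal : ENNReal.ofReal (3*t^(-N))^2 * ENNReal.ofReal (4*t/r) *
            ENNReal.ofReal (t^n) / ENNReal.ofReal (t ^ (N+1)) =
            ENNReal.ofReal (36/r) * ENNReal.ofReal (t^(-(2*N))) := by
          rw [← ENNReal.ofReal_pow (by positivity), ← ENNReal.ofReal_mul (by positivity),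
            ← ENNReal.ofReal_mul (by positivity), ← ENNReal.ofReal_div_of_pos hW0,
            ← ENNReal.ofReal_mul (by positivity)]
          congr 1
          have hu : (0:ℝ) < t^N := Real.rpow_pos_of_pos ht0 _
          have e1 : t^(-N) = (t^N)⁻¹ := by rw [Real.rpow_neg ht0.le]
          have e2 : t^(N+1) = t^N * t := by rw [Real.rpow_add ht0, Real.rpow_one]
          have e3 : t^(-(2*N)) = ((t^N)*(t^N))⁻¹ := by
            rw [show -(2*N) = (-N) + (-N) by ring, Real.rpow_add ht0, e1, mul_inv]
          have e4 : (t:ℝ)^(n:ℕ) = t^N := by rw [hNdef, Real.rpow_natCast]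
          rw [e1, e2, e3, e4]
          field_simp
          ring
        calc (∫⁻ y' in ball x (1*t), intAmp n γ f y' t ^ 2) / ENNReal.ofReal (t ^ (N+1))
            ≤ ((ENNReal.ofReal (3*t^(-N)) * ∑' k : ℕ, χ k t * a k)^2 *
                volume (ball x (1*t))) / ENNReal.ofReal (t ^ (N+1)) := by
              apply ENNReal.div_le_div_right
              calc ∫⁻ y' in ball x (1*t), intAmp n γ f y' t ^ 2
                  ≤ ∫⁻ _y' in ball x (1*t),
                      (ENNReal.ofReal (3*t^(-N)) * ∑' k : ℕ, χ k t * a k)^2 :=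
                    setLIntegral_mono' measurableSet_ball
                      (fun y' h => pow_le_pow_left' (hb y' h) 2)
                _ = _ := by rw [setLIntegral_const]
          _ ≤ (ENNReal.ofReal (3*t^(-N))^2 *
                (ENNReal.ofReal (4*t/r) * ∑' k : ℕ, χ k t * (2:ℝ≥0∞)^(-(k:ℝ)) * a k ^2) *
                (ENNReal.ofReal (t^n) * κ)) / ENNReal.ofReal (t ^ (N+1)) := by
              apply ENNReal.div_le_div_right
              rw [mul_pow, one_mul, hball x t ht0.le]
              exact mul_le_mul' (mul_le_mul_right hCS _) le_rfl
          _ = ∑' k : ℕ, χ k t * ENNReal.ofReal (t^(-(2*N))) *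
                (κ * ENNReal.ofReal (36/r) * (2:ℝ≥0∞)^(-(k:ℝ)) * a k ^2) := by
              rw [div_eq_mul_inv]
              rw [show ENNReal.ofReal (3*t^(-N))^2 *
                (ENNReal.ofReal (4*t/r) * ∑' k : ℕ, χ k t * (2:ℝ≥0∞)^(-(k:ℝ)) * a k ^2) *
                (ENNReal.ofReal (t^n) * κ) * (ENNReal.ofReal (t ^ (N+1)))⁻¹ =
                ((∑' k : ℕ, χ k t * (2:ℝ≥0∞)^(-(k:ℝ)) * a k ^2) * κ) *
                (ENNReal.ofReal (3*t^(-N))^2 * ENNReal.ofReal (4*t/r) *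
                  ENNReal.ofReal (t^n) * (ENNReal.ofReal (t ^ (N+1)))⁻¹) by ring]
              rw [← div_eq_mul_inv, hscal]
              rw [← ENNReal.tsum_mul_right, ← ENNReal.tsum_mul_right]
              apply tsum_congr
              intro k
              ring
    _ = ∑' k : ℕ, ∫⁻ t in Set.Ioi (0:ℝ), χ k t * ENNReal.ofReal (t^(-(2*N))) *
          (κ * ENNReal.ofReal (36/r) * (2:ℝ≥0∞)^(-(k:ℝ)) * a k ^2) := by
        apply lintegral_tsum
        intro k
        exact (((hmeasχ k).mul hmeasg).mul_const _).aemeasurable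
    _ ≤ ∑' k : ℕ, (ENNReal.ofReal C * d k * a k)^2 := by
        apply ENNReal.tsum_le_tsum
        intro k
        set K : ℝ≥0∞ := κ * ENNReal.ofReal (36/r) * (2:ℝ≥0∞)^(-(k:ℝ)) with hKdef
        have hβ0 : (0:ℝ) < (2:ℝ)^k * r / 2 := by positivity
        have hstep : (∫⁻ t in Set.Ioi (0:ℝ), χ k t * ENNReal.ofReal (t^(-(2*N))) * (K * a k ^2))
            ≤ ENNReal.ofReal (((2:ℝ)^k * r / 2)^(1-2*N)/(2*N-1)) * (K * a k ^2) := by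
          rw [lintegral_congr (fun t => by ring :
            ∀ t:ℝ, χ k t * ENNReal.ofReal (t^(-(2*N))) * (K * a k ^2) =
              (K * a k ^2) * (χ k t * ENNReal.ofReal (t^(-(2*N)))))]
          rw [lintegral_const_mul'' (K * a k ^2) (f := fun t => χ k t * ENNReal.ofReal (t^(-(2*N)))) (((hmeasχ k).mul hmeasg).aemeasurable)]
          rw [mul_comm (ENNReal.ofReal _) (K * a k ^2)]
          apply mul_le_mul_right
          calc ∫⁻ t in Set.Ioi (0:ℝ), χ k t * ENNReal.ofReal (t^(-(2*N)))
              ≤ ∫⁻ t in Set.Ioi (0:ℝ),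
                  (Set.Ici ((2:ℝ)^k * r / 2)).indicator
                    (fun t => ENNReal.ofReal (t^(-(2*N)))) t := by
                apply setLIntegral_mono' measurableSet_Ioi
                intro t _
                by_cases hmem : t ∈ Set.Ici ((2:ℝ)^k * r / 2)
                · rw [Set.indicator_of_mem hmem]
                  have h1 : χ k t ≤ 1 := by rw [hχdef]; simp only; split <;> simp
                  calc χ k t * ENNReal.ofReal (t^(-(2*N)))
                      ≤ 1 * ENNReal.ofReal (t^(-(2*N))) := mul_le_mul_left h1 _
                    _ = _ := one_mul _
                · rw [Set.indicator_of_notMem hmem]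
                  have h1 : χ k t = 0 := by
                    rw [hχdef]
                    simp only
                    rw [if_neg]
                    intro hcon
                    exact hmem (by rw [Set.mem_Ici]; linarith)
                  rw [h1, zero_mul]
            _ ≤ ∫⁻ t, (Set.Ici ((2:ℝ)^k * r / 2)).indicator
                  (fun t => ENNReal.ofReal (t^(-(2*N)))) t := setLIntegral_le_lintegral _ _
            _ = ∫⁻ t in Set.Ici ((2:ℝ)^k * r / 2), ENNReal.ofReal (t^(-(2*N))) :=
                lintegral_indicator measurableSet_Ici _
            _ = ∫⁻ t in Set.Ioi ((2:ℝ)^k * r / 2), ENNReal.ofReal (t^(-(2*N))) :=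
                setLIntegral_congr (Ioi_ae_eq_Ici (a := (2:ℝ)^k * r / 2)).symm
            _ = ENNReal.ofReal (((2:ℝ)^k * r / 2)^(1-2*N)/(2*N-1)) := myTInt hn hβ0
        refine hstep.trans ?_
        -- Step C : scalar comparison
        have hA0 : (0:ℝ) < (2:ℝ)^(k+2)*r := by positivity
        have hdk : d k = (ENNReal.ofReal (((2:ℝ)^(k+2)*r)^n) * κ)⁻¹ := by
          rw [hddef]
          simp only
          rw [hball y _ hA0.le]
        have hV0 : ENNReal.ofReal (((2:ℝ)^(k+2)*r)^n) ≠ 0 :=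
          (ENNReal.ofReal_pos.mpr (pow_pos hA0 n)).ne'
        have hVtop : ENNReal.ofReal (((2:ℝ)^(k+2)*r)^n) ≠ ∞ := ENNReal.ofReal_ne_top
        have h2k : ((2:ℝ≥0∞))^(-(k:ℝ)) = ENNReal.ofReal ((2:ℝ)^(-(k:ℝ))) := by
          rw [← ENNReal.ofReal_rpow_of_pos (by norm_num : (0:ℝ) < 2)]
          congr 1
          simp
        have hKofReal : K = ENNReal.ofReal (κR * (36/r) * (2:ℝ)^(-(k:ℝ))) := by
          rw [hKdef, hκeq, h2k, ← ENNReal.ofReal_mul hκR0, ← ENNReal.ofReal_mul (by positivity)]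
        have hs0 : (0:ℝ) ≤ ((2:ℝ)^k * r / 2)^(1-2*N)/(2*N-1) := by
          apply div_nonneg (Real.rpow_nonneg (by positivity) _)
          linarith
        have hSC : ENNReal.ofReal (((2:ℝ)^k * r / 2)^(1-2*N)/(2*N-1)) * K ≤
            ENNReal.ofReal C ^2 * d k ^2 := by
          rw [hKofReal, ← ENNReal.ofReal_mul hs0, hdk, ← ENNReal.inv_pow,
            ← ENNReal.ofReal_pow hC0.le, ← div_eq_mul_inv,
            ENNReal.le_div_iff_mul_le
              (Or.inl (pow_ne_zero _ (mul_ne_zero hV0 hκ0)))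
              (Or.inl (ENNReal.pow_ne_top (ENNReal.mul_ne_top hVtop hκtop))),
            hκeq, ← ENNReal.ofReal_mul (by positivity), ← ENNReal.ofReal_pow (by positivity),
            ← ENNReal.ofReal_mul (by positivity)]
          apply ENNReal.ofReal_le_ofReal
          rw [hCdef]
          exact myRealBound hn hr hκR0
        calc ENNReal.ofReal (((2:ℝ)^k * r / 2)^(1-2*N)/(2*N-1)) * (K * a k ^2)
            = (ENNReal.ofReal (((2:ℝ)^k * r / 2)^(1-2*N)/(2*N-1)) * K) * a k ^2 := by ring
          _ ≤ (ENNReal.ofReal C ^2 * d k ^2) * a k ^2 := mul_le_mul_left hSC _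
          _ = (ENNReal.ofReal C * d k * a k)^2 := by rw [mul_pow, mul_pow]
    _ ≤ (∑' k : ℕ, ENNReal.ofReal C * d k * a k)^2 := mySumSq _
    _ = (ENNReal.ofReal C * T)^2 := by
        rw [hTdef]
        congr 1
        rw [← ENNReal.tsum_mul_left]
        apply tsum_congr
        intro k
        ring
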